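/- Matrix equation theorem (BKR): Let p ≠ 0 be a real polynomial and q₁,…,qₙ real polynomials each coprime with p. Let σ₁,…,σₘ be distinct sign assignments (Fin n → {−1,1}) containing all sign vectors realized at roots of p, and let I₁,…,I_l ⊆ Fin n. Define the l×m matrix M by M(i,j) = ∏_{k ∈ Iᵢ} σⱼ(k), the vector w ∈ ℤ^m by wⱼ = #{x : p(x)=0 ∧ ∀k, sign(q_k(x)) = σⱼ(k)}, and v ∈ ℤ^l by vᵢ = N(p, ∏_{k ∈ Iᵢ} q_k). Then M · w = v. -/

import Mathlib

open Polynomial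

private lemma real_sign_mul (a b : ℝ) : Real.sign (a * b) = Real.sign a * Real.sign b := by
  rcases lt_trichotomy a 0 with ha | ha | ha <;>
    rcases lt_trichotomy b 0 with hb | hb | hb
  · rw [Real.sign_of_pos (mul_pos_of_neg_of_neg ha hb), Real.sign_of_neg ha,
      Real.sign_of_neg hb]; ring
  · simp [hb, Real.sign_zero]
  · rw [Real.sign_of_neg (mul_neg_of_neg_of_pos ha hb), Real.sign_of_neg ha,
      Real.sign_of_pos hb]; ring
  · simp [ha, Real.sign_zero]
  · simp [ha, Real.sign_zero]
  · simp [ha, Real.sign_zero]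
  · rw [Real.sign_of_neg (mul_neg_of_pos_of_neg ha hb), Real.sign_of_pos ha,
      Real.sign_of_neg hb]; ring
  · simp [hb, Real.sign_zero]
  · rw [Real.sign_of_pos (mul_pos ha hb), Real.sign_of_pos ha, Real.sign_of_pos hb]; ring

private lemma real_sign_prod {α : Type*} (s : Finset α) (g : α → ℝ) :
    Real.sign (∏ a ∈ s, g a) = ∏ a ∈ s, Real.sign (g a) := by
  classical
  induction s using Finset.induction with
  | empty => simp [Real.sign_one]
  | insert a s h ih => simp [Finset.prod_insert h, real_sign_mul, ih]

theorem matrix_equation (p : Polynomial ℝ) (hp : p ≠ 0)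
    (n m l : ℕ) (q : Fin n → Polynomial ℝ)
    (hq : ∀ k, IsCoprime p (q k))
    (σ : Fin m → Fin n → ℝ)
    (hdist : Function.Injective σ)
    (hval : ∀ j k, σ j k = 1 ∨ σ j k = -1)
    (hall : ∀ x : ℝ, p.eval x = 0 → ∃ j, ∀ k, Real.sign ((q k).eval x) = σ j k)
    (I : Fin l → Finset (Fin n)) :
    (Matrix.of fun (i : Fin l) (j : Fin m) => ∏ k ∈ I i, σ j k).mulVec
      (fun j : Fin m =>
        ({x : ℝ | p.eval x = 0 ∧ ∀ k, Real.sign ((q k).eval x) = σ j k}.ncard : ℝ)) =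
    (fun i : Fin l =>
      ({x : ℝ | p.eval x = 0 ∧ (∏ k ∈ I i, q k).eval x > 0}.ncard : ℝ) -
      ({x : ℝ | p.eval x = 0 ∧ (∏ k ∈ I i, q k).eval x < 0}.ncard : ℝ)) := by
  classical
  have hqne : ∀ (k : Fin n) (x : ℝ), p.eval x = 0 → (q k).eval x ≠ 0 := by
    intro k x hx hqx
    obtain ⟨a, b, hab⟩ := hq k
    have := congrArg (Polynomial.eval x) hab
    simp [hx, hqx] at this
  set R : Finset ℝ := p.roots.toFinset with hRdef
  have hmem : ∀ x : ℝ, x ∈ R ↔ p.eval x = 0 := by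
    intro x
    simp [hRdef, Polynomial.mem_roots, hp]
  -- convert set ncards to finset cards
  have hncard : ∀ (P : ℝ → Prop) [DecidablePred P],
      {x : ℝ | p.eval x = 0 ∧ P x}.ncard = (R.filter P).card := by
    intro P _
    have : {x : ℝ | p.eval x = 0 ∧ P x} = ↑(R.filter P) := by
      ext x; simp [hmem, and_comm]
    rw [this, Set.ncard_coe_finset]
  funext i
  simp only [Matrix.mulVec, dotProduct, Matrix.of_apply]
  rw [hncard (fun x => (∏ k ∈ I i, q k).eval x > 0),
      hncard (fun x => (∏ k ∈ I i, q k).eval x < 0)]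
  rw [Finset.sum_congr rfl (fun j _ => by
    rw [hncard (fun x => ∀ k, Real.sign ((q k).eval x) = σ j k)])]
  -- the sign function on roots
  set f : ℝ → ℝ := fun x => Real.sign ((∏ k ∈ I i, q k).eval x) with hf
  have hfval : ∀ x ∈ R, ∀ j : Fin m, (∀ k, Real.sign ((q k).eval x) = σ j k) →
      f x = ∏ k ∈ I i, σ j k := by
    intro x _ j hj
    simp only [hf, Polynomial.eval_prod, real_sign_prod]
    exact Finset.prod_congr rfl fun k _ => hj k
  -- RHS = sum of f over R
  have hprodne : ∀ x ∈ R, (∏ k ∈ I i, q k).eval x ≠ 0 := by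
    intro x hx
    rw [Polynomial.eval_prod]
    exact Finset.prod_ne_zero_iff.mpr fun k _ => hqne k x ((hmem x).mp hx)
  have hRHS : ((R.filter fun x => (∏ k ∈ I i, q k).eval x > 0).card : ℝ) -
      ((R.filter fun x => (∏ k ∈ I i, q k).eval x < 0).card : ℝ) = ∑ x ∈ R, f x := by
    rw [← Finset.sum_filter_add_sum_filter_not R (fun x => (∏ k ∈ I i, q k).eval x > 0) f]
    have h1 : ∑ x ∈ R.filter (fun x => (∏ k ∈ I i, q k).eval x > 0), f x =
        ((R.filter fun x => (∏ k ∈ I i, q k).eval x > 0).card : ℝ) := by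
      rw [Finset.sum_congr rfl (fun x hx => ?_), Finset.sum_const, nsmul_eq_mul, mul_one]
      exact Real.sign_of_pos (Finset.mem_filter.mp hx).2
    have heq : R.filter (fun x => ¬ (∏ k ∈ I i, q k).eval x > 0) =
        R.filter (fun x => (∏ k ∈ I i, q k).eval x < 0) := by
      apply Finset.filter_congr
      intro x hx
      simp only [not_lt, gt_iff_lt]
      constructor
      · intro h; exact lt_of_le_of_ne h (hprodne x hx)
      · intro h; exact le_of_lt h
    have h2 : ∑ x ∈ R.filter (fun x => ¬ (∏ k ∈ I i, q k).eval x > 0), f x =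
        -((R.filter fun x => (∏ k ∈ I i, q k).eval x < 0).card : ℝ) := by
      rw [heq, Finset.sum_congr rfl (fun x hx => ?_), Finset.sum_const, nsmul_eq_mul,
        mul_neg_one]
      exact Real.sign_of_neg (Finset.mem_filter.mp hx).2
    rw [h1, h2]; ring
  rw [hRHS]
  -- partition R by sign vectors
  have hcover : R = Finset.univ.biUnion
      (fun j : Fin m => R.filter (fun x => ∀ k, Real.sign ((q k).eval x) = σ j k)) := by
    ext x
    simp only [Finset.mem_biUnion, Finset.mem_univ, Finset.mem_filter, true_and]
    constructor
    · intro hx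
      obtain ⟨j, hj⟩ := hall x ((hmem x).mp hx)
      exact ⟨j, hx, hj⟩
    · rintro ⟨j, hx, -⟩; exact hx
  have hdisj : ((Finset.univ : Finset (Fin m)) : Set (Fin m)).PairwiseDisjoint
      (fun j : Fin m => R.filter (fun x => ∀ k, Real.sign ((q k).eval x) = σ j k)) := by
    intro j _ j' _ hjj'
    simp only [Function.onFun, Finset.disjoint_left, Finset.mem_filter]
    rintro x ⟨hx, hj⟩ ⟨-, hj'⟩
    exact hjj' (hdist (funext fun k => (hj k).symm.trans (hj' k)))
  have hsum : ∑ x ∈ R, f x = ∑ j : Fin m,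
      ∑ x ∈ R.filter (fun x => ∀ k, Real.sign ((q k).eval x) = σ j k), f x := by
    conv_lhs => rw [hcover]
    exact Finset.sum_biUnion hdisj
  rw [hsum]
  apply Finset.sum_congr rfl
  intro j _
  rw [Finset.sum_congr rfl (fun x hx => hfval x (Finset.mem_filter.mp hx).1 j
      (Finset.mem_filter.mp hx).2), Finset.sum_const, nsmul_eq_mul]
  ring
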